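/- Let (a,b,c) be a Markoff triple of reals, and define the 2×2 real matrices M₀ = [[c/b, a/b²], [a, a − c/b]] and M₁ = [[0, −1/b], [b, b]]. Then det(M₀) = det(M₁) = 1, tr(M₀) = a, tr(M₁) = b, tr(M₀·M₁⁻¹) = c, and tr(M₀·M₁·M₀⁻¹·M₁⁻¹) = −2. -/

import Mathlib

open Matrix

/-- Let `(a,b,c)` be a Markoff triple of reals and define
`M₀ = [[c/b, a/b²], [a, a − c/b]]` and `M₁ = [[0, −1/b], [b, b]]`. Then
`det M₀ = det M₁ = 1`, `tr M₀ = a`, `tr M₁ = b`, `tr (M₀·M₁⁻¹) = c` and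
`tr (M₀·M₁·M₀⁻¹·M₁⁻¹) = −2`. -/
theorem markoff_matrices (a b c : ℝ) (ha : 2 < a) (hb : 2 < b) (hc : 2 < c)
    (habc : a ^ 2 + b ^ 2 + c ^ 2 = a * b * c) :
    det !![c / b, a / b ^ 2; a, a - c / b] = 1 ∧
    det !![(0 : ℝ), -1 / b; b, b] = 1 ∧
    trace !![c / b, a / b ^ 2; a, a - c / b] = a ∧
    trace !![(0 : ℝ), -1 / b; b, b] = b ∧
    trace (!![c / b, a / b ^ 2; a, a - c / b] * (!![(0 : ℝ), -1 / b; b, b])⁻¹) = c ∧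
    trace (!![c / b, a / b ^ 2; a, a - c / b] * !![(0 : ℝ), -1 / b; b, b] *
      (!![c / b, a / b ^ 2; a, a - c / b])⁻¹ * (!![(0 : ℝ), -1 / b; b, b])⁻¹) = -2 := by
  have hb0 : b ≠ 0 := by positivity
  have h0 : (!![(0 : ℝ), -1 / b; b, b])⁻¹ = !![b, 1 / b; -b, 0] := by
    apply inv_eq_right_inv
    ext i j
    fin_cases i <;> fin_cases j <;>
      simp [Matrix.mul_apply, Fin.sum_univ_two] <;> field_simp
  have h1 : (!![c / b, a / b ^ 2; a, a - c / b])⁻¹ = !![a - c / b, -(a / b ^ 2); -a, c / b] := by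
    apply inv_eq_right_inv
    ext i j
    fin_cases i <;> fin_cases j <;>
      simp [Matrix.mul_apply, Fin.sum_univ_two] <;> field_simp <;>
      first
        | ring1
        | linear_combination (-b ^ 2) * habc
        | linear_combination (-1 : ℝ) * habc
  rw [h0, h1]
  refine ⟨?_, ?_, ?_, ?_, ?_, ?_⟩ <;>
    simp [Matrix.det_fin_two_of, Matrix.trace_fin_two, Matrix.mul_fin_two] <;>
    field_simp <;>
    first
      | ring1
      | linear_combination (-b ^ 2) * habc
      | linear_combination (2 * b ^ 16) * habc
      | linear_combination (-1 : ℝ) * habc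
      | linear_combination (2 : ℝ) * habc
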